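/- arXiv:1408.2428 — 2 statements merged into one kernel-verified Lean document; each statement's English description precedes it below -/
import Mathlib

section
/- If a monomial h₁ dominates a monomial h₂ (i.e., h₂(x) ≤ h₁(x)) at two points a and b of F^n, where F is a divisible linearly ordered abelian group, then h₁ dominates h₂ at every point a^t b^{1−t} (t rational, 0 ≤ t ≤ 1) on the segment connecting a and b. -/
lemma seg_eval {F : Type*} [AddCommGroup F] [Module ℚ F]
    {n : ℕ} (α : F) (i : Fin n → ℤ) (a b : Fin n → F) (t : ℚ) :
    α + ∑ j, i j • (t • a j + (1 - t) • b j)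
      = t • (α + ∑ j, i j • a j) + (1 - t) • (α + ∑ j, i j • b j) := by
  have hα : t • α + (1 - t) • α = α := by
    rw [← add_smul]; simp
  simp only [smul_add, Finset.smul_sum]
  have : ∀ j, i j • (t • a j) + i j • ((1 - t) • b j)
      = t • (i j • a j) + (1 - t) • (i j • b j) := fun j => by
    rw [smul_comm (i j) t, smul_comm (i j) (1 - t)]
  simp only [this, Finset.sum_add_distrib]
  rw [add_add_add_comm, hα]

/-- If a monomial `h₁` dominates a monomial `h₂` (i.e. `h₂(x) ≤ h₁(x)`) at two points
`a` and `b` of `Fⁿ`, where `F` is a divisible linearly ordered abelian group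
(modelled additively, divisibility giving an order-compatible `ℚ`-module structure;
a monomial `α·x₁^{i₁}···xₙ^{iₙ}` becomes `α + ∑ j, iⱼ • xⱼ`), then `h₁` dominates
`h₂` at every point `a^t b^{1−t}` (i.e. `t • a + (1-t) • b`, coordinatewise, for
rational `0 ≤ t ≤ 1`) on the segment connecting `a` and `b`. -/
theorem monomial_domination_on_segment {F : Type*} [AddCommGroup F] [LinearOrder F]
    [IsOrderedAddMonoid F]
    [Module ℚ F] [PosSMulMono ℚ F] {n : ℕ} (α₁ α₂ : F) (i₁ i₂ : Fin n → ℤ)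
    (a b : Fin n → F) (h₁ h₂ : (Fin n → F) → F)
    (hh₁ : h₁ = fun x => α₁ + ∑ j, i₁ j • x j)
    (hh₂ : h₂ = fun x => α₂ + ∑ j, i₂ j • x j)
    (ha : h₂ a ≤ h₁ a) (hb : h₂ b ≤ h₁ b)
    (t : ℚ) (ht0 : 0 ≤ t) (ht1 : t ≤ 1) :
    h₂ (fun j => t • a j + (1 - t) • b j) ≤ h₁ (fun j => t • a j + (1 - t) • b j) := by
  subst hh₁ hh₂
  simp only at ha hb ⊢
  rw [seg_eval, seg_eval]
  exact add_le_add (smul_le_smul_of_nonneg_left ha ht0)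
    (smul_le_smul_of_nonneg_left hb (by linarith))
end

section
/- Let F be the supertropical semifield over ℚ and let X ⊂ F^(2) be the corner locus of f = λ₁ + λ₂ + 0 (the tropical line). There is no tangible polynomial g ∈ F[λ₁,λ₂] such that g(a) is tangible for all tangible points a of X and g ≡ f on X; i.e., the restriction of f to X admits no tangible lift among polynomials. However, λ₁λ₂ + 0 is a tangible polynomial agreeing in ν-value with λ₁² + λ₂² + 0 on X. -/
/-- The supertropical semifield over `ℚ`: an element is given by its `ν`-value in `ℚ`
together with a flag which is `true` for ghost elements and `false` for tangibles. -/
structure STQ where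
  val : ℚ
  ghost : Bool
  deriving DecidableEq

/-- Supertropical addition: the element of larger `ν`-value wins, and a tie produces
a ghost (`a + a = a^ν`). -/
instance : Add STQ :=
  ⟨fun x y => if y.val < x.val then x else if x.val < y.val then y else ⟨x.val, true⟩⟩

/-- Evaluation of a tangible monomial `α·λ₁^i·λ₂^j`, recorded as the data
`(α, i, j) : ℚ × ℕ × ℕ`, at the tangible point `(x, y)` (max-plus conventions). -/
def tmonEval (m : ℚ × ℕ × ℕ) (x y : ℚ) : STQ :=
  ⟨m.1 + (m.2.1 : ℚ) * x + (m.2.2 : ℚ) * y, false⟩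

/-- Evaluation of a tangible polynomial, given as a nonempty list `m :: ms` of tangible
monomials, at the tangible point `(x, y)`: the supertropical sum of the monomial values. -/
def tpolyEval (m : ℚ × ℕ × ℕ) (ms : List (ℚ × ℕ × ℕ)) (x y : ℚ) : STQ :=
  ms.foldl (fun s m' => s + tmonEval m' x y) (tmonEval m x y)

/-- The set of tangible points of the tropical line `X = Z_corner(λ₁ + λ₂ + 0)`:
points where at least two of `λ₁, λ₂, 0` attain the maximum. -/
def Xline : Set (ℚ × ℚ) :=
  {p | (p.1 = p.2 ∧ 0 ≤ p.1) ∨ (p.2 = 0 ∧ p.1 ≤ 0) ∨ (p.1 = 0 ∧ p.2 ≤ 0)}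

lemma add_def (x y : STQ) : x + y = if y.val < x.val then x else if x.val < y.val then y else ⟨x.val, true⟩ := rfl

lemma stq_add_eq_left {x y : STQ} (h : y.val < x.val) : x + y = x := by
  rw [add_def, if_pos h]

lemma stq_add_eq_right {x y : STQ} (h : x.val < y.val) : x + y = y := by
  rw [add_def, if_neg (asymm h), if_pos h]

lemma add_eq_ghost {x y : STQ} (h : x.val = y.val) : x + y = ⟨x.val, true⟩ := by
  rw [add_def, if_neg (by rw [h]; exact lt_irrefl _), if_neg (by rw [h]; exact lt_irrefl _)]

lemma add_val (x y : STQ) : (x + y).val = max x.val y.val := by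
  rcases lt_trichotomy y.val x.val with h | h | h
  · rw [stq_add_eq_left h, max_eq_left h.le]
  · rw [add_eq_ghost h.symm]; simp [h]
  · rw [stq_add_eq_right h, max_eq_right h.le]

lemma foldl_le (l : List STQ) (s : STQ) :
    s.val ≤ (l.foldl (· + ·) s).val ∧ ∀ x ∈ l, x.val ≤ (l.foldl (· + ·) s).val := by
  induction l generalizing s with
  | nil => simp
  | cons a l ih =>
    simp only [List.foldl_cons]
    obtain ⟨h1, h2⟩ := ih (s + a)
    refine ⟨le_trans ?_ h1, ?_⟩
    · rw [add_val]; exact le_max_left _ _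
    · intro x hx
      rcases List.mem_cons.1 hx with rfl | hx
      · exact le_trans (by rw [add_val]; exact le_max_right _ _) h1
      · exact h2 x hx

lemma foldl_mem_val (l : List STQ) (s : STQ) :
    (l.foldl (· + ·) s).val = s.val ∨ ∃ x ∈ l, (l.foldl (· + ·) s).val = x.val := by
  induction l generalizing s with
  | nil => simp
  | cons a l ih =>
    simp only [List.foldl_cons]
    rcases lt_trichotomy a.val s.val with h | h | h
    · rw [stq_add_eq_left h]
      rcases ih s with h' | ⟨x, hx, h'⟩
      · exact Or.inl h'
      · exact Or.inr ⟨x, List.mem_cons_of_mem _ hx, h'⟩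
    · rw [add_eq_ghost h.symm]
      rcases ih ⟨s.val, true⟩ with h' | ⟨x, hx, h'⟩
      · exact Or.inl h'
      · exact Or.inr ⟨x, List.mem_cons_of_mem _ hx, h'⟩
    · rw [stq_add_eq_right h]
      rcases ih a with h' | ⟨x, hx, h'⟩
      · exact Or.inr ⟨a, List.mem_cons_self, h'⟩
      · exact Or.inr ⟨x, List.mem_cons_of_mem _ hx, h'⟩

lemma foldl_ghost_lt (l : List STQ) (s : STQ) (hs : s.ghost = true) :
    (l.foldl (· + ·) s).ghost = false → s.val < (l.foldl (· + ·) s).val := by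
  induction l generalizing s with
  | nil => intro h; simp only [List.foldl_nil] at h; rw [hs] at h; exact absurd h (by simp)
  | cons a l ih =>
    simp only [List.foldl_cons]
    rcases lt_trichotomy a.val s.val with h | h | h
    · rw [stq_add_eq_left h]; exact ih s hs
    · rw [add_eq_ghost h.symm]; exact ih ⟨s.val, true⟩ rfl
    · rw [stq_add_eq_right h]
      intro _
      exact lt_of_lt_of_le h (foldl_le l a).1

lemma foldl_count (l : List STQ) (s : STQ) :
    (l.foldl (· + ·) s).ghost = false →
    (s :: l).countP (fun x => decide (x.val = (l.foldl (· + ·) s).val)) ≤ 1 := by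
  induction l generalizing s with
  | nil => intro _; simp only [List.foldl_nil, List.countP_cons, List.countP_nil]; split_ifs <;> simp
  | cons a l ih =>
    simp only [List.foldl_cons]
    rcases lt_trichotomy a.val s.val with h | h | h
    · simp only [stq_add_eq_left h]
      intro hg
      have ihs := ih s hg
      rw [List.countP_cons] at ihs
      rw [List.countP_cons, List.countP_cons]
      have ha0 : ¬ (a.val = (l.foldl (· + ·) s).val) :=
        ne_of_lt (lt_of_lt_of_le h (foldl_le l s).1)
      simp only [ha0, decide_eq_true_eq, if_false, decide_false] at *
      simp at *
      omega
    · simp only [add_eq_ghost h.symm]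
      intro hg
      have ihs := ih ⟨s.val, true⟩ hg
      have hlt : s.val < (l.foldl (· + ·) (⟨s.val, true⟩ : STQ)).val :=
        foldl_ghost_lt l _ rfl hg
      rw [List.countP_cons] at ihs
      rw [List.countP_cons, List.countP_cons]
      have hs0 : ¬ (s.val = (l.foldl (· + ·) (⟨s.val, true⟩ : STQ)).val) :=
        ne_of_lt hlt
      have ha0 : ¬ (a.val = (l.foldl (· + ·) (⟨s.val, true⟩ : STQ)).val) := h ▸ hs0
      simp only [hs0, ha0, decide_eq_true_eq, if_false, decide_false] at *
      simp at *
      omega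
    · simp only [stq_add_eq_right h]
      intro hg
      have ihs := ih a hg
      rw [List.countP_cons] at ihs
      rw [List.countP_cons, List.countP_cons]
      have hs0 : ¬ (s.val = (l.foldl (· + ·) a).val) :=
        ne_of_lt (lt_of_lt_of_le h (foldl_le l a).1)
      simp only [hs0, decide_eq_true_eq, if_false, decide_false] at *
      simp at *
      omega

lemma two_countP {α : Type} (p : α → Bool) (l : List α) (a b : α) (ha : a ∈ l) (hb : b ∈ l)
    (hab : a ≠ b) (hpa : p a = true) (hpb : p b = true) : 2 ≤ l.countP p := by
  induction l with
  | nil => cases ha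
  | cons x l ih =>
    rw [List.countP_cons]
    rcases List.mem_cons.1 ha with rfl | ha'
    · have hb' : b ∈ l := (List.mem_cons.1 hb).resolve_left (fun h => hab h.symm)
      have h1 : 0 < l.countP p := List.countP_pos_iff.2 ⟨b, hb', hpb⟩
      rw [if_pos hpa]; omega
    · rcases List.mem_cons.1 hb with rfl | hb'
      · have h1 : 0 < l.countP p := List.countP_pos_iff.2 ⟨a, ha', hpa⟩
        rw [if_pos hpb]; omega
      · have := ih ha' hb'
        split_ifs <;> omega

/-- Let `F` be the supertropical semifield over `ℚ` and `X ⊂ F^(2)` the corner locus of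
`f = λ₁ + λ₂ + 0` (the tropical line).  (1) There is no tangible polynomial
`g ∈ F[λ₁,λ₂]` (a nonempty list of monomials with tangible coefficients and distinct
pure parts) whose value at every tangible point of `X` is tangible and of the same
`ν`-value `max(λ₁, λ₂, 0)` as `f`; i.e. the restriction of `f` to `X` admits no
tangible lift among polynomials.  (2) However, `λ₁λ₂ + 0` is a tangible polynomial
agreeing in `ν`-value with `λ₁² + λ₂² + 0` on `X`. -/
theorem no_tangible_lift_on_tropical_line :
    (¬ ∃ (m : ℚ × ℕ × ℕ) (ms : List (ℚ × ℕ × ℕ)),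
        (m :: ms).Pairwise (fun u v => u.2 ≠ v.2) ∧
        ∀ p ∈ Xline, (tpolyEval m ms p.1 p.2).ghost = false ∧
          (tpolyEval m ms p.1 p.2).val = max p.1 (max p.2 0))
    ∧ (∀ p ∈ Xline,
        (tpolyEval (0, 1, 1) [(0, 0, 0)] p.1 p.2).val
          = (tpolyEval (0, 2, 0) [(0, 0, 2), (0, 0, 0)] p.1 p.2).val) := by
  constructor
  · rintro ⟨m, ms, _hpw, h⟩
    have key : ∀ x y : ℚ, tpolyEval m ms x y
        = (ms.map (fun q => tmonEval q x y)).foldl (· + ·) (tmonEval m x y) := by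
      intro x y
      rw [tpolyEval, List.foldl_map]
    have bound : ∀ x y : ℚ, ∀ q ∈ m :: ms,
        (tmonEval q x y).val ≤ (tpolyEval m ms x y).val := by
      intro x y q hq
      rw [key]
      rcases List.mem_cons.1 hq with rfl | hq'
      · exact (foldl_le _ _).1
      · exact (foldl_le _ _).2 _ (List.mem_map_of_mem hq')
    have achieve : ∀ x y : ℚ, ∃ q ∈ m :: ms,
        (tmonEval q x y).val = (tpolyEval m ms x y).val := by
      intro x y
      rw [key x y]
      rcases foldl_mem_val (ms.map (fun q => tmonEval q x y)) (tmonEval m x y) with hh | ⟨z, hz, hh⟩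
      · exact ⟨m, List.mem_cons_self, hh.symm⟩
      · obtain ⟨q, hq, rfl⟩ := List.mem_map.1 hz
        exact ⟨q, List.mem_cons_of_mem _ hq, hh.symm⟩
    -- the origin
    have h0 := h (0, 0) (Or.inl ⟨rfl, le_refl 0⟩)
    have hv0 : (tpolyEval m ms 0 0).val = 0 := by simpa using h0.2
    have bound0 : ∀ q ∈ m :: ms, q.1 ≤ 0 := by
      intro q hq
      have hb := bound 0 0 q hq
      rw [hv0] at hb
      simpa [tmonEval] using hb
    -- a large value t
    set A : ℚ := ((m :: ms).map (fun q => |q.1|)).sum with hAdef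
    have hAq : ∀ q ∈ m :: ms, |q.1| ≤ A := by
      intro q hq
      refine List.single_le_sum ?_ _ (List.mem_map_of_mem hq)
      intro x hx
      obtain ⟨r, _, rfl⟩ := List.mem_map.1 hx
      exact abs_nonneg _
    have hA0 : 0 ≤ A := le_trans (abs_nonneg m.1) (hAq m (List.mem_cons_self))
    set t : ℚ := A + 1 with htdef
    have ht : 0 < t := by simp only [htdef]; linarith
    have h1 := h (t, t) (Or.inl ⟨rfl, ht.le⟩)
    have hvt : (tpolyEval m ms t t).val = t := by
      have h12 := h1.2
      simp only [max_self, max_eq_left ht.le] at h12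
      simpa using h12
    obtain ⟨q1, hq1m, hq1⟩ := achieve t t
    rw [hvt] at hq1
    simp only [tmonEval] at hq1
    have hk : q1.2.1 + q1.2.2 = 1 ∧ q1.1 = 0 := by
      have hle := bound0 q1 hq1m
      have habs := hAq q1 hq1m
      rw [abs_le] at habs
      rcases Nat.lt_or_ge (q1.2.1 + q1.2.2) 2 with hk2 | hk2
      · rcases Nat.lt_or_ge (q1.2.1 + q1.2.2) 1 with hk1 | hk1
        · exfalso
          have hi0 : q1.2.1 = 0 := by omega
          have hj0 : q1.2.2 = 0 := by omega
          rw [hi0, hj0] at hq1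
          push_cast at hq1
          linarith
        · have hs1 : q1.2.1 + q1.2.2 = 1 := by omega
          refine ⟨hs1, ?_⟩
          have hcast : (q1.2.1 : ℚ) + (q1.2.2 : ℚ) = 1 := by exact_mod_cast hs1
          have hexp : ((q1.2.1 : ℚ) + (q1.2.2 : ℚ)) * t
              = (q1.2.1 : ℚ) * t + (q1.2.2 : ℚ) * t := add_mul _ _ _
          rw [hcast, one_mul] at hexp
          linarith
      · exfalso
        have hcast : (2 : ℚ) ≤ (q1.2.1 : ℚ) + (q1.2.2 : ℚ) := by exact_mod_cast hk2
        have hmul : (2 : ℚ) * t ≤ ((q1.2.1 : ℚ) + (q1.2.2 : ℚ)) * t :=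
          mul_le_mul_of_nonneg_right hcast ht.le
        have hexp : ((q1.2.1 : ℚ) + (q1.2.2 : ℚ)) * t
            = (q1.2.1 : ℚ) * t + (q1.2.2 : ℚ) * t := add_mul _ _ _
        rw [hexp] at hmul
        linarith [habs.1]
    -- the point (-1, 0)
    have h2 := h (-1, 0) (Or.inr (Or.inl ⟨rfl, by norm_num⟩))
    have hv2 : (tpolyEval m ms (-1) 0).val = 0 := by simpa using h2.2
    obtain ⟨q2, hq2m, hq2⟩ := achieve (-1) 0
    rw [hv2] at hq2
    simp only [tmonEval] at hq2
    have hq2e : q2.1 = 0 ∧ q2.2.1 = 0 := by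
      have hle := bound0 q2 hq2m
      have hi : (0 : ℚ) ≤ (q2.2.1 : ℚ) := Nat.cast_nonneg _
      have hi0 : (q2.2.1 : ℚ) = 0 := by linarith
      refine ⟨by linarith, by exact_mod_cast hi0⟩
    -- the point (0, -1)
    have h3 := h (0, -1) (Or.inr (Or.inr ⟨rfl, by norm_num⟩))
    have hv3 : (tpolyEval m ms 0 (-1)).val = 0 := by simpa using h3.2
    obtain ⟨q3, hq3m, hq3⟩ := achieve 0 (-1)
    rw [hv3] at hq3
    simp only [tmonEval] at hq3
    have hq3e : q3.1 = 0 ∧ q3.2.2 = 0 := by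
      have hle := bound0 q3 hq3m
      have hj : (0 : ℚ) ≤ (q3.2.2 : ℚ) := Nat.cast_nonneg _
      have hj0 : (q3.2.2 : ℚ) = 0 := by linarith
      refine ⟨by linarith, by exact_mod_cast hj0⟩
    -- count achievers at the origin
    have hgf : ((ms.map (fun q => tmonEval q 0 0)).foldl (· + ·) (tmonEval m 0 0)).ghost = false := by
      rw [← key]; exact h0.1
    have hvf : ((ms.map (fun q => tmonEval q 0 0)).foldl (· + ·) (tmonEval m 0 0)).val = 0 := by
      rw [← key]; exact hv0
    have hcount := foldl_count (ms.map (fun q => tmonEval q 0 0)) (tmonEval m 0 0) hgf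
    rw [hvf] at hcount
    have hlist : (tmonEval m 0 0) :: ms.map (fun q => tmonEval q 0 0)
        = (m :: ms).map (fun q => tmonEval q 0 0) := rfl
    rw [hlist, List.countP_map] at hcount
    have hpred : ∀ q : ℚ × ℕ × ℕ, q.1 = 0 →
        ((fun x : STQ => decide (x.val = 0)) ∘ (fun q => tmonEval q 0 0)) q = true := by
      intro q hq
      simp [tmonEval, hq]
    rcases Nat.eq_zero_or_pos q1.2.1 with hi | hi
    · -- q1 = (0, 0, 1), contradicts with q3 = (0, _, 0)
      have hj : 0 < q1.2.2 := by omega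
      have hne : q1 ≠ q3 := by
        intro he
        rw [he] at hj
        omega
      have h2c := two_countP _ (m :: ms) q1 q3 hq1m hq3m hne (hpred q1 hk.2) (hpred q3 hq3e.1)
      omega
    · -- q1 = (0, 1, 0), contradicts with q2 = (0, 0, _)
      have hne : q1 ≠ q2 := by
        intro he
        rw [he] at hi
        omega
      have h2c := two_countP _ (m :: ms) q1 q2 hq1m hq2m hne (hpred q1 hk.2) (hpred q2 hq2e.1)
      omega
  · intro p hp
    obtain ⟨x, y⟩ := p
    simp only [Xline, Set.mem_setOf_eq] at hp
    simp only [tpolyEval, List.foldl_cons, List.foldl_nil, add_val, tmonEval]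
    norm_num
    rcases hp with ⟨h1, h2⟩ | ⟨h1, h2⟩ | ⟨h1, h2⟩ <;> subst h1 <;>
      simp only [max_def] <;> split_ifs <;> linarith
end
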